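/- arXiv:1811.05833 — 3 statements merged into one kernel-verified Lean document; each statement's English description precedes it below -/
import Mathlib

section
/- Let γ > 1 and let R, Q be positive real numbers. Then there exists a unique real number Z with R ≤ Z satisfying Q = (1 - R/Z) · Z^γ; moreover this Z satisfies R < Z. -/
theorem stmt_0 (γ R Q : ℝ) (hγ : 1 < γ) (hR : 0 < R) (hQ : 0 < Q) :
    (∃! Z : ℝ, R ≤ Z ∧ Q = (1 - R / Z) * Z ^ γ) ∧
    (∀ Z : ℝ, R ≤ Z → Q = (1 - R / Z) * Z ^ γ → R < Z) := by
  set g : ℝ → ℝ := fun Z => Z ^ (γ - 1) * (Z - R) with hg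
  have key : ∀ Z : ℝ, 0 < Z → (1 - R / Z) * Z ^ γ = g Z := by
    intro Z hZ
    have h1 : Z ^ γ = Z ^ (γ - 1) * Z := by
      rw [← Real.rpow_add_one hZ.ne' (γ - 1)]; ring_nf
    simp only [hg]
    field_simp
    rw [h1]; ring
  have hmono : StrictMonoOn g (Set.Ici R) := by
    intro a ha b hb hab
    simp only [Set.mem_Ici] at ha hb
    have hapos : 0 < a := lt_of_lt_of_le hR ha
    have hbpos : 0 < b := lt_of_lt_of_le hR hb
    calc a ^ (γ - 1) * (a - R) ≤ b ^ (γ - 1) * (a - R) :=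
          mul_le_mul_of_nonneg_right
            (Real.rpow_le_rpow hapos.le hab.le (by linarith)) (by linarith)
      _ < b ^ (γ - 1) * (b - R) :=
          mul_lt_mul_of_pos_left (by linarith) (Real.rpow_pos_of_pos hbpos _)
  have hgR : g R = 0 := by simp [hg]
  -- existence via IVT
  set M : ℝ := max (max R 1) (Q + R) with hM
  have hRM : R ≤ M := le_max_of_le_left (le_max_left R 1)
  have hM1 : (1:ℝ) ≤ M := le_max_of_le_left (le_max_right R 1)
  have hMQ : Q + R ≤ M := le_max_right _ _
  have hgM : Q ≤ g M := by
    have h1 : (1:ℝ) ≤ M ^ (γ - 1) := by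
      have := Real.rpow_le_rpow_of_exponent_le hM1 (by linarith : (0:ℝ) ≤ γ - 1)
      rwa [Real.rpow_zero] at this
    calc Q ≤ M - R := by linarith
      _ = 1 * (M - R) := (one_mul _).symm
      _ ≤ M ^ (γ - 1) * (M - R) := mul_le_mul_of_nonneg_right h1 (by linarith)
  have hcont : ContinuousOn g (Set.Icc R M) := by
    apply ContinuousOn.mul
    · exact ContinuousOn.rpow_const continuousOn_id fun x _ => Or.inr (by linarith)
    · exact (continuousOn_id.sub continuousOn_const)
  obtain ⟨Z, hZmem, hgZ⟩ := intermediate_value_Icc hRM hcont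
    (by rw [hgR]; exact ⟨hQ.le, hgM⟩)
  have hRZ : R ≤ Z := hZmem.1
  have hZpos : 0 < Z := lt_of_lt_of_le hR hRZ
  constructor
  · refine ⟨Z, ⟨hRZ, by rw [key Z hZpos, hgZ]⟩, ?_⟩
    rintro y ⟨hRy, hy⟩
    have hypos : 0 < y := lt_of_lt_of_le hR hRy
    have : g y = g Z := by rw [hgZ, ← key y hypos]; exact hy.symm
    exact hmono.injOn hRy (Set.mem_Ici.mpr hRZ) this
  · intro W hRW hW
    have hWpos : 0 < W := lt_of_lt_of_le hR hRW
    rcases eq_or_lt_of_le hRW with h | h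
    · exfalso
      rw [key W hWpos, ← h, hgR] at hW
      linarith
    · exact h
end

section
/- Let γ > 1, γ₊ > 1, and let R₀, Q₀, τ₀ > 0. Let Z(τ) be the differentiable implicit solution of Q₀τ₀τ^{-1} = (1 - R₀τ₀τ^{-1}/Z) Z^γ with R₀τ₀τ^{-1} < Z. Then the map τ ↦ Z(τ)^{γ₊} is strictly decreasing on (0,∞). -/
theorem stmt_4 (γ γp R₀ Q₀ τ₀ : ℝ) (hγ : 1 < γ) (hγp : 1 < γp)
    (hR₀ : 0 < R₀) (hQ₀ : 0 < Q₀) (hτ₀ : 0 < τ₀)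
    (Z : ℝ → ℝ)
    (hlt : ∀ τ > 0, R₀ * τ₀ / τ < Z τ)
    (hdiff : ∀ τ > 0, DifferentiableAt ℝ Z τ)
    (heq : ∀ τ > 0, Q₀ * τ₀ / τ = (1 - (R₀ * τ₀ / τ) / Z τ) * (Z τ) ^ γ) :
    StrictAntiOn (fun τ => (Z τ) ^ γp) (Set.Ioi (0 : ℝ)) := by
  have hZpos : ∀ τ > 0, 0 < Z τ := by
    intro τ hτ
    have : 0 < R₀ * τ₀ / τ := by positivity
    exact this.trans (hlt τ hτ)
  -- invert the relation: τ = Q₀τ₀/Z^γ + R₀τ₀/Z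
  have key : ∀ τ > 0, τ = Q₀ * τ₀ / (Z τ) ^ γ + R₀ * τ₀ / Z τ := by
    intro τ hτ
    have hw := hZpos τ hτ
    have hwγ : (0:ℝ) < (Z τ) ^ γ := Real.rpow_pos_of_pos hw γ
    have h := heq τ hτ
    field_simp at h ⊢
    nlinarith [h]
  intro a ha b hb hab
  simp only [Set.mem_Ioi] at ha hb
  have hZa := hZpos a ha
  have hZb := hZpos b hb
  have hZba : Z b < Z a := by
    by_contra hcon
    push_neg at hcon
    rcases eq_or_lt_of_le hcon with h | h
    · rw [key a ha, key b hb, h] at hab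
      exact lt_irrefl _ hab
    · have hγ0 : (0:ℝ) < γ := by linarith
      have h1 : (Z a) ^ γ < (Z b) ^ γ := Real.rpow_lt_rpow hZa.le h hγ0
      have h2 : Q₀ * τ₀ / (Z b) ^ γ < Q₀ * τ₀ / (Z a) ^ γ := by
        apply div_lt_div_of_pos_left (by positivity) (Real.rpow_pos_of_pos hZa γ) h1
      have h3 : R₀ * τ₀ / Z b < R₀ * τ₀ / Z a :=
        div_lt_div_of_pos_left (by positivity) hZa h
      have : b < a := by
        rw [key a ha, key b hb]; linarith
      linarith
  exact Real.rpow_lt_rpow hZb.le hZba (by linarith)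
end

section
/- Let γ > 1. For positive reals R, Q let Z(R,Q) ≥ R be the unique solution of Q = (1 - R/Z)Z^γ. Fix Q > 0. Then Z(R,Q) → ∞ as R → ∞, and for fixed R > 0, Z(R,Q) → ∞ as Q → ∞. In particular, if R + Q → ∞ then Z(R,Q) → ∞. -/
theorem stmt_18 (γ : ℝ) (hγ : 1 < γ) (Z : ℝ → ℝ → ℝ)
    (hZ : ∀ R Q : ℝ, 0 < R → 0 < Q →
      R ≤ Z R Q ∧ Q = (1 - R / Z R Q) * (Z R Q) ^ γ) :
    (∀ Q > (0 : ℝ), Filter.Tendsto (fun R => Z R Q) Filter.atTop Filter.atTop) ∧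
    (∀ R > (0 : ℝ), Filter.Tendsto (fun Q => Z R Q) Filter.atTop Filter.atTop) ∧
    (∀ R Q : ℕ → ℝ, (∀ n, 0 < R n) → (∀ n, 0 < Q n) →
      Filter.Tendsto (fun n => R n + Q n) Filter.atTop Filter.atTop →
      Filter.Tendsto (fun n => Z (R n) (Q n)) Filter.atTop Filter.atTop) := by
  have hγ0 : (0 : ℝ) < γ := lt_trans one_pos hγ
  have key : ∀ R Q : ℝ, 0 < R → 0 < Q → Q ^ (1 / γ) ≤ Z R Q := by
    intro R Q hR hQ
    obtain ⟨h1, h2⟩ := hZ R Q hR hQ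
    have hZpos : 0 < Z R Q := lt_of_lt_of_le hR h1
    have hle : Q ≤ Z R Q ^ γ := by
      have h3 : (1 - R / Z R Q) ≤ 1 := by
        have : 0 ≤ R / Z R Q := div_nonneg hR.le hZpos.le
        linarith
      have h4 : (0 : ℝ) ≤ Z R Q ^ γ := Real.rpow_nonneg hZpos.le γ
      nlinarith [h2]
    calc Q ^ (1 / γ) ≤ (Z R Q ^ γ) ^ (1 / γ) :=
          Real.rpow_le_rpow hQ.le hle (by positivity)
      _ = Z R Q := by
          rw [← Real.rpow_mul hZpos.le, one_div, mul_inv_cancel₀ (ne_of_gt hγ0),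
            Real.rpow_one]
  have hrpow : Filter.Tendsto (fun x : ℝ => x ^ (1 / γ)) Filter.atTop Filter.atTop :=
    tendsto_rpow_atTop (by positivity)
  refine ⟨?_, ?_, ?_⟩
  · intro Q hQ
    refine Filter.tendsto_atTop_mono' _ ?_ Filter.tendsto_id
    filter_upwards [Filter.eventually_gt_atTop 0] with R hR
    exact (hZ R Q hR hQ).1
  · intro R hR
    refine Filter.tendsto_atTop_mono' _ ?_ hrpow
    filter_upwards [Filter.eventually_gt_atTop 0] with Q hQ
    exact key R Q hR hQ
  · intro R Q hR hQ hsum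
    have hmax : Filter.Tendsto (fun n => max (R n) (Q n)) Filter.atTop Filter.atTop := by
      refine Filter.tendsto_atTop_mono (fun n => ?_)
        (hsum.atTop_div_const two_pos)
      rcases le_total (R n) (Q n) with h | h
      · simp only [max_eq_right h]; linarith [(hR n).le]
      · simp only [max_eq_left h]; linarith [(hQ n).le]
    have hbound : ∀ n, min (max (R n) (Q n)) ((max (R n) (Q n)) ^ (1 / γ)) ≤
        Z (R n) (Q n) := by
      intro n
      rcases le_total (Q n) (R n) with h | h
      · calc min (max (R n) (Q n)) ((max (R n) (Q n)) ^ (1 / γ)) ≤ max (R n) (Q n) :=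
              min_le_left _ _
          _ = R n := max_eq_left h
          _ ≤ Z (R n) (Q n) := (hZ _ _ (hR n) (hQ n)).1
      · calc min (max (R n) (Q n)) ((max (R n) (Q n)) ^ (1 / γ))
            ≤ (max (R n) (Q n)) ^ (1 / γ) := min_le_right _ _
          _ = (Q n) ^ (1 / γ) := by rw [max_eq_right h]
          _ ≤ Z (R n) (Q n) := key _ _ (hR n) (hQ n)
    refine Filter.tendsto_atTop_mono hbound ?_
    rw [Filter.tendsto_atTop]
    intro b
    filter_upwards [(Filter.tendsto_atTop.1 hmax) b,
      (Filter.tendsto_atTop.1 (hrpow.comp hmax)) b] with n h1 h2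
    exact le_min h1 h2
end
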